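/- Let (b,0) be connected (c ≡ 0), and suppose e_n ∈ D̃ with ‖e_n - 1‖_o → 0. Then for any u ∈ D̃ with 0 ≤ u ≤ 1, one has ‖e_n ∧ u - u‖_o → 0, where (e_n ∧ u)(x) = min(e_n(x), u(x)). -/

import Mathlib

open scoped ENNReal NNReal BigOperators
open MeasureTheory Filter

/-- A weighted graph `(b,c)` over a vertex set `V`. -/
structure WeightedGraph (V : Type*) where
  b : V → V → ℝ
  c : V → ℝ
  b_nonneg : ∀ x y, 0 ≤ b x y
  b_diag : ∀ x, b x x = 0
  b_symm : ∀ x y, b x y = b y x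
  b_summable : ∀ x, Summable fun y => b x y
  c_nonneg : ∀ x, 0 ≤ c x

/-- Membership in `ℓ²(V,m)`. -/
def MemL2 {V : Type*} (m : V → ℝ) (u : V → ℝ) : Prop :=
  Summable fun x => u x ^ 2 * m x

/-- The inner product of `ℓ²(V,m)`. -/
noncomputable def l2inner {V : Type*} (m : V → ℝ) (u v : V → ℝ) : ℝ :=
  ∑' x, u x * v x * m x

namespace WeightedGraph

variable {V : Type*} (G : WeightedGraph V)

/-- The energy functional `Q̃` with values in `[0,∞]`. -/
noncomputable def energy (u : V → ℝ) : ℝ≥0∞ :=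
  (1 / 2) * ∑' p : V × V, ENNReal.ofReal (G.b p.1 p.2 * (u p.1 - u p.2) ^ 2)
    + ∑' x, ENNReal.ofReal (G.c x * u x ^ 2)

/-- The functions of finite energy (`D̃`). -/
def FiniteEnergy (u : V → ℝ) : Prop := G.energy u < ⊤

/-- The real-valued bilinear energy form (meaningful on functions of finite energy). -/
noncomputable def energyBilin (u v : V → ℝ) : ℝ :=
  (1 / 2) * ∑' p : V × V, G.b p.1 p.2 * (u p.1 - u p.2) * (v p.1 - v p.2)
    + ∑' x, G.c x * u x * v x

/-- The generalized vertex degree. -/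
noncomputable def deg (x : V) : ℝ := (∑' y, G.b x y) + G.c x

/-- The formal Laplacian `L̃` associated with `(b,c)` and the measure `m`. -/
noncomputable def formalL (m : V → ℝ) (u : V → ℝ) (x : V) : ℝ :=
  ((∑' y, G.b x y * (u x - u y)) + G.c x * u x) / m x

/-- Connectedness of the weighted graph: any two vertices are joined by a path of edges. -/
def Connected : Prop :=
  ∀ x y : V, ∃ (n : ℕ) (p : ℕ → V), p 0 = x ∧ p n = y ∧ ∀ i < n, 0 < G.b (p i) (p (i + 1))

/-- The squared distance of the Yamasaki space with base point `o`. -/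
noncomputable def ydistSq (o : V) (u v : V → ℝ) : ℝ :=
  (G.energy (fun x => u x - v x)).toReal + (u o - v o) ^ 2

/-- The domain of the regular Dirichlet form `Q^(D)`: the closure of the finitely
supported functions in `D̃ ∩ ℓ²(V,m)` with respect to the form norm. -/
def regDom (m : V → ℝ) : Set (V → ℝ) :=
  {u | G.FiniteEnergy u ∧ MemL2 m u ∧
    ∃ f : ℕ → V → ℝ, (∀ n, (Function.support (f n)).Finite) ∧
      Filter.Tendsto
        (fun n => (G.energy (fun x => u x - f n x)).toReal + ∑' x, (u x - f n x) ^ 2 * m x)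
        Filter.atTop (nhds 0)}

/-- Transience of a Dirichlet form given by its domain: existence of a strictly positive
reference function `g ∈ ℓ¹(V,m) ∩ ℓ^∞(V)` with `⟨|u|,g⟩ ≤ Q(u)^{1/2}` on the domain. -/
def FormTransient (m : V → ℝ) (dom : Set (V → ℝ)) : Prop :=
  ∃ g : V → ℝ, (∀ x, 0 < g x) ∧ (Summable fun x => g x * m x) ∧ (∃ C, ∀ x, g x ≤ C) ∧
    ∀ u ∈ dom, ∑' x, |u x| * g x * m x ≤ Real.sqrt (G.energyBilin u u)

end WeightedGraph

/-- The data of a Dirichlet form `Q` associated with a weighted graph `(b,c)` on `ℓ²(V,m)`,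
together with its semigroup `T t = e^{-tL}` and resolvent `R α = (L+α)^{-1}`, with the
standard properties: `Q` is a restriction of `Q̃` with `D(Q^(D)) ⊆ D(Q) ⊆ D(Q^(N))`,
the semigroup is symmetric, Markovian, positivity preserving, the resolvent is characterized
by the form, and the resolvent is the Laplace transform of the semigroup. -/
structure FormSetup {V : Type*} (G : WeightedGraph V) (m : V → ℝ) where
  dom : Set (V → ℝ)
  dom_fe : ∀ u ∈ dom, G.FiniteEnergy u
  dom_l2 : ∀ u ∈ dom, MemL2 m u
  reg_sub : G.regDom m ⊆ dom
  T : ℝ → (V → ℝ) → V → ℝ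
  R : ℝ → (V → ℝ) → V → ℝ
  T_linear : ∀ t, IsLinearMap ℝ (T t)
  R_linear : ∀ α, IsLinearMap ℝ (R α)
  T_semigroup : ∀ s t : ℝ, 0 < s → 0 < t → ∀ f, T (s + t) f = T s (T t f)
  T_l2 : ∀ t : ℝ, 0 < t → ∀ f, MemL2 m f → MemL2 m (T t f)
  T_symm : ∀ t : ℝ, 0 < t → ∀ f g, MemL2 m f → MemL2 m g →
    l2inner m (T t f) g = l2inner m f (T t g)
  T_contraction : ∀ t : ℝ, 0 < t → ∀ f, MemL2 m f →
    ∑' x, T t f x ^ 2 * m x ≤ ∑' x, f x ^ 2 * m x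
  T_pos : ∀ t : ℝ, 0 < t → ∀ f, (∀ x, 0 ≤ f x) → ∀ x, 0 ≤ T t f x
  T_markov : ∀ t : ℝ, 0 < t → ∀ f, (∀ x, 0 ≤ f x ∧ f x ≤ 1) →
    ∀ x, 0 ≤ T t f x ∧ T t f x ≤ 1
  T_cont : ∀ f, MemL2 m f → ∀ x, ContinuousOn (fun t => T t f x) (Set.Ioi (0 : ℝ))
  R_mem : ∀ α : ℝ, 0 < α → ∀ f, MemL2 m f → R α f ∈ dom
  R_pos : ∀ α : ℝ, 0 < α → ∀ f, (∀ x, 0 ≤ f x) → ∀ x, 0 ≤ R α f x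
  R_char : ∀ α : ℝ, 0 < α → ∀ f, MemL2 m f → ∀ v ∈ dom,
    G.energyBilin (R α f) v + α * l2inner m (R α f) v = l2inner m f v
  R_laplace : ∀ α : ℝ, 0 < α → ∀ f, MemL2 m f → (∀ x, 0 ≤ f x) → ∀ y,
    ENNReal.ofReal (R α f y) =
      ∫⁻ t in Set.Ioi (0 : ℝ), ENNReal.ofReal (Real.exp (-α * t) * T t f y)

namespace FormSetup

variable {V : Type*} {G : WeightedGraph V} {m : V → ℝ}

open scoped Classical in
/-- The Green function `G(x,y) = ∫₀^∞ (e^{-tL} δ_x)(y) dt`, with values in `[0,∞]`. -/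
noncomputable def green (S : FormSetup G m) (x y : V) : ℝ≥0∞ :=
  ∫⁻ t in Set.Ioi (0 : ℝ), ENNReal.ofReal (S.T t (fun z => if z = x then 1 else 0) y)

/-- The extended Dirichlet space `D(Q)_e`: functions which are pointwise limits of
`Q`-Cauchy sequences from `D(Q)`. -/
def extDom (S : FormSetup G m) : Set (V → ℝ) :=
  {u | ∃ f : ℕ → V → ℝ, (∀ n, f n ∈ S.dom) ∧
    (∀ ε > (0 : ℝ), ∃ N, ∀ p ≥ N, ∀ q ≥ N,
      G.energyBilin (fun x => f p x - f q x) (fun x => f p x - f q x) < ε) ∧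
    ∀ x, Filter.Tendsto (fun n => f n x) Filter.atTop (nhds (u x))}

/-- Stochastic completeness: the resolvent `(L+1)^{-1}`, extended to `ℓ^∞(V)` by monotone
limits, maps the constant function `1` to `1`. -/
def StochComplete (S : FormSetup G m) : Prop :=
  ∀ f : ℕ → V → ℝ, (∀ n, MemL2 m (f n)) →
    (∀ n x, 0 ≤ f n x ∧ f n x ≤ f (n + 1) x ∧ f n x ≤ 1) →
    (∀ x, Filter.Tendsto (fun n => f n x) Filter.atTop (nhds 1)) →
    ∀ x, Filter.Tendsto (fun n => S.R 1 (f n) x) Filter.atTop (nhds 1)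

end FormSetup


private lemma min_sub_sq_le (a1 a2 t1 t2 : ℝ) :
    ((min a1 t1 - t1) - (min a2 t2 - t2))^2 ≤ 2*(a1-a2)^2 + 8*(t1-t2)^2 := by
  have h1 := abs_min_sub_min_le_max a1 t1 a2 t2
  have h2 : (min a1 t1 - min a2 t2)^2 ≤ (a1-a2)^2 + (t1-t2)^2 := by
    have h3 : |min a1 t1 - min a2 t2|^2 ≤ (max |a1 - a2| |t1 - t2|)^2 :=
      pow_le_pow_left₀ (abs_nonneg _) h1 2
    rw [sq_abs] at h3
    refine h3.trans ?_
    rcases max_cases |a1 - a2| |t1 - t2| with ⟨hm, _⟩ | ⟨hm, _⟩ <;> rw [hm, sq_abs]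
    · exact le_add_of_nonneg_right (sq_nonneg _)
    · exact le_add_of_nonneg_left (sq_nonneg _)
  nlinarith [sq_nonneg (min a1 t1 - min a2 t2 + (t1 - t2)), sq_nonneg (t1 - t2)]

private lemma tendsto_zero_of_sq {v : ℕ → ℝ}
    (h : Tendsto (fun n => (v n)^2) atTop (nhds 0)) :
    Tendsto v atTop (nhds 0) := by
  have habs := (Real.continuous_sqrt.tendsto 0).comp h
  rw [Real.sqrt_zero] at habs
  have habs' : Tendsto (fun n => |v n|) atTop (nhds 0) :=
    habs.congr fun n => Real.sqrt_sq_eq_abs _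
  have hneg := habs'.neg
  rw [neg_zero] at hneg
  exact tendsto_of_tendsto_of_tendsto_of_le_of_le hneg habs'
    (fun n => neg_abs_le _) (fun n => le_abs_self _)

private lemma ofReal_mul_sq_tendsto_zero (b : ℝ) {v : ℕ → ℝ}
    (hv : Tendsto v atTop (nhds 0)) :
    Tendsto (fun n => ENNReal.ofReal (b * (v n)^2)) atTop (nhds 0) := by
  have h2 : Tendsto (fun n => b * (v n)^2) atTop (nhds (b * 0^2)) := (hv.pow 2).const_mul b
  rw [show b * (0:ℝ)^2 = 0 by ring] at h2
  have h3 := (ENNReal.continuous_ofReal.tendsto 0).comp h2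
  rwa [ENNReal.ofReal_zero] at h3

private lemma tsum_tendsto_zero_of_dominated {ι : Type*} [Countable ι]
    {h g : ℕ → ι → ℝ≥0∞} {G : ι → ℝ≥0∞}
    (hle : ∀ n i, h n i ≤ g n i)
    (hh : ∀ i, Tendsto (fun n => h n i) atTop (nhds 0))
    (hg : ∀ i, Tendsto (fun n => g n i) atTop (nhds (G i)))
    (hgsum : Tendsto (fun n => ∑' i, g n i) atTop (nhds (∑' i, G i)))
    (hfin : ∑' i, G i ≠ ⊤) :
    Tendsto (fun n => ∑' i, h n i) atTop (nhds 0) := by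
  letI : MeasurableSpace ι := ⊤
  haveI : MeasurableSingletonClass ι := ⟨fun _ => trivial⟩
  have hGdiff : ∀ i, Tendsto (fun n => g n i - h n i) atTop (nhds (G i)) := by
    intro i
    have := ENNReal.Tendsto.sub (hg i) (hh i) (Or.inr (by simp))
    rwa [tsub_zero] at this
  have key : (∑' i, G i) ≤ atTop.liminf (fun n => ∑' i, (g n i - h n i)) := by
    calc (∑' i, G i)
        = ∫⁻ i, atTop.liminf (fun n => g n i - h n i) ∂Measure.count := by
          rw [lintegral_count]
          exact tsum_congr fun i => ((hGdiff i).liminf_eq).symm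
      _ ≤ atTop.liminf (fun n => ∫⁻ i, (g n i - h n i) ∂Measure.count) :=
          lintegral_liminf_le (fun n => measurable_from_top)
      _ = atTop.liminf (fun n => ∑' i, (g n i - h n i)) := by
          simp only [lintegral_count]
  rw [ENNReal.tendsto_nhds_zero]
  intro ε hε
  rcases eq_or_ne ε ⊤ with rfl | hεtop
  · exact Eventually.of_forall fun n => le_top
  have hε2 : (0:ℝ≥0∞) < ε/2 := ENNReal.half_pos hε.ne'
  have hε2top : ε/2 ≠ ⊤ := by
    exact (ENNReal.div_lt_top hεtop (by norm_num)).ne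
  by_cases hcase : (∑' i, G i) ≤ ε / 2
  · have hlt : (∑' i, G i) < ε := lt_of_le_of_lt hcase (ENNReal.half_lt_self hε.ne' hεtop)
    filter_upwards [hgsum.eventually_lt_const hlt] with n hn
    exact le_trans (ENNReal.tsum_le_tsum (hle n)) hn.le
  · push_neg at hcase
    have hAne : (∑' i, G i) ≠ 0 := (lt_of_le_of_lt zero_le hcase).ne'
    have h1 : (∑' i, G i) - ε/2 < atTop.liminf (fun n => ∑' i, (g n i - h n i)) :=
      lt_of_lt_of_le (ENNReal.sub_lt_self hfin hAne hε2.ne') key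
    have E2 := eventually_lt_of_lt_liminf h1
    have E1 := hgsum.eventually_lt_const
      (show (∑' i, G i) < (∑' i, G i) + ε/2 from ENNReal.lt_add_right hfin hε2.ne')
    filter_upwards [E1, E2] with n h1n h2n
    have hsplit : (∑' i, (g n i - h n i)) + ∑' i, h n i = ∑' i, g n i := by
      rw [← ENNReal.tsum_add]
      exact tsum_congr fun i => tsub_add_cancel_of_le (hle n i)
    have hgn_fin : (∑' i, g n i) ≠ ⊤ :=
      (h1n.trans (ENNReal.add_lt_top.2 ⟨hfin.lt_top, hε2top.lt_top⟩)).ne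
    have hBne : (∑' i, (g n i - h n i)) ≠ ⊤ := by
      intro htop
      rw [htop, top_add] at hsplit
      exact hgn_fin hsplit.symm
    have hmain : (∑' i, (g n i - h n i)) + ∑' i, h n i
        < (∑' i, (g n i - h n i)) + ε := by
      rw [hsplit]
      calc (∑' i, g n i) < (∑' i, G i) + ε/2 := h1n
        _ = ((∑' i, G i) - ε/2 + ε/2) + ε/2 := by rw [tsub_add_cancel_of_le hcase.le]
        _ = ((∑' i, G i) - ε/2) + (ε/2 + ε/2) := by rw [add_assoc]
        _ = ((∑' i, G i) - ε/2) + ε := by rw [ENNReal.add_halves]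
        _ ≤ (∑' i, (g n i - h n i)) + ε := add_le_add_left h2n.le ε
    exact ((ENNReal.add_lt_add_iff_left hBne).1 hmain).le

/-- if `c ≡ 0`, `e_n → 1` in the Yamasaki space and `0 ≤ u ≤ 1` has finite
energy, then `e_n ∧ u → u` in the Yamasaki space. -/
theorem min_with_approx_one_converges {V : Type*} [Countable V] (G : WeightedGraph V)
    (hconn : G.Connected) (hc : ∀ x, G.c x = 0) (o : V)
    (e : ℕ → V → ℝ) (he : ∀ n, G.FiniteEnergy (e n))
    (helim : Filter.Tendsto (fun n => G.ydistSq o (e n) (fun _ => 1)) Filter.atTop (nhds 0))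
    (u : V → ℝ) (hu : G.FiniteEnergy u) (h01 : ∀ x, 0 ≤ u x ∧ u x ≤ 1) :
    Filter.Tendsto (fun n => G.ydistSq o (fun x => min (e n x) (u x)) u)
      Filter.atTop (nhds 0) := by
  classical
  -- energy simplification when c = 0
  have energy_c0 : ∀ w : V → ℝ, G.energy w
      = (1/2 : ℝ≥0∞) * ∑' p : V × V, ENNReal.ofReal (G.b p.1 p.2 * (w p.1 - w p.2)^2) := by
    intro w
    simp [WeightedGraph.energy, hc]
  -- split the hypothesis
  have helim' : Tendsto (fun n => (G.energy (fun x => e n x - 1)).toReal + (e n o - 1)^2)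
      atTop (nhds 0) := by
    simpa [WeightedGraph.ydistSq] using helim
  have hE : Tendsto (fun n => (G.energy (fun x => e n x - 1)).toReal) atTop (nhds 0) :=
    squeeze_zero (fun n => ENNReal.toReal_nonneg)
      (fun n => le_add_of_nonneg_right (sq_nonneg _)) helim'
  have hO : Tendsto (fun n => (e n o - 1)^2) atTop (nhds 0) :=
    squeeze_zero (fun n => sq_nonneg _)
      (fun n => le_add_of_nonneg_left ENNReal.toReal_nonneg) helim'
  have hshift : ∀ n, G.energy (fun x => e n x - 1) = G.energy (e n) := by
    intro n
    rw [energy_c0, energy_c0]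
    exact congrArg _ (tsum_congr fun p => congrArg ENNReal.ofReal (by ring))
  have hfinE : ∀ n, G.energy (fun x => e n x - 1) ≠ ⊤ := fun n => by
    rw [hshift n]; exact (he n).ne
  have hEtop : Tendsto (fun n => G.energy (fun x => e n x - 1)) atTop (nhds 0) := by
    have h2 := (ENNReal.continuous_ofReal.tendsto 0).comp hE
    rw [ENNReal.ofReal_zero] at h2
    exact h2.congr fun n => ENNReal.ofReal_toReal (hfinE n)
  -- the edge sums of e n - 1 tend to zero
  have hS : Tendsto (fun n => ∑' p : V × V,
      ENNReal.ofReal (G.b p.1 p.2 * (e n p.1 - e n p.2)^2)) atTop (nhds 0) := by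
    have h2 : Tendsto (fun n => (2:ℝ≥0∞) * G.energy (fun x => e n x - 1)) atTop
        (nhds ((2:ℝ≥0∞) * 0)) := ENNReal.Tendsto.const_mul hEtop (Or.inr ENNReal.ofNat_ne_top)
    rw [mul_zero] at h2
    refine h2.congr fun n => ?_
    rw [energy_c0, ← mul_assoc,
      show (2:ℝ≥0∞) * (1/2) = 1 by
        rw [one_div, ENNReal.mul_inv_cancel (by norm_num) ENNReal.ofNat_ne_top],
      one_mul]
    exact tsum_congr fun p => congrArg ENNReal.ofReal (by ring)
  -- edgewise convergence
  have hedge : ∀ x y : V, 0 < G.b x y →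
      Tendsto (fun n => e n x - e n y) atTop (nhds 0) := by
    intro x y hb
    have ht0 : Tendsto (fun n => ENNReal.ofReal (G.b x y * (e n x - e n y)^2)) atTop (nhds 0) :=
      tendsto_of_tendsto_of_tendsto_of_le_of_le tendsto_const_nhds hS
        (fun n => zero_le)
        (fun n => ENNReal.le_tsum ((x, y) : V × V))
    have htr : Tendsto (fun n => G.b x y * (e n x - e n y)^2) atTop (nhds 0) := by
      have h3 := (ENNReal.tendsto_toReal (by simp : (0:ℝ≥0∞) ≠ ⊤)).comp ht0
      simp only [ENNReal.toReal_zero] at h3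
      refine h3.congr fun n => ENNReal.toReal_ofReal ?_
      have := sq_nonneg (e n x - e n y)
      positivity
    have hsq : Tendsto (fun n => (e n x - e n y)^2) atTop (nhds 0) := by
      have h4 := htr.const_mul (G.b x y)⁻¹
      rw [mul_zero] at h4
      refine h4.congr fun n => ?_
      rw [← mul_assoc, inv_mul_cancel₀ hb.ne', one_mul]
    exact tendsto_zero_of_sq hsq
  -- pointwise convergence e n x → 1
  have hpt1 : ∀ x, Tendsto (fun n => e n x) atTop (nhds 1) := by
    intro x
    obtain ⟨k, p, hp0, hpk, hpe⟩ := hconn o x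
    have ho : Tendsto (fun n => e n o - 1) atTop (nhds 0) := tendsto_zero_of_sq hO
    have claim : ∀ i, i ≤ k → Tendsto (fun n => e n (p i) - 1) atTop (nhds 0) := by
      intro i
      induction i with
      | zero => intro _; rw [hp0]; exact ho
      | succ j ih =>
        intro hjk
        have hj : j ≤ k := Nat.le_of_succ_le hjk
        have hjlt : j < k := hjk
        have hedgej := hedge (p j) (p (j+1)) (hpe j hjlt)
        have h5 := (ih hj).sub hedgej
        rw [sub_zero] at h5
        exact h5.congr fun n => by ring
    have hx := claim k le_rfl
    rw [hpk] at hx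
    have h6 := hx.add (tendsto_const_nhds (x := (1:ℝ)))
    rw [zero_add] at h6
    exact h6.congr fun n => by ring
  -- pointwise convergence of min (e n x) (u x) - u x
  have hfpt : ∀ x, Tendsto (fun n => min (e n x) (u x) - u x) atTop (nhds 0) := by
    intro x
    have hmin : Tendsto (fun n => min (e n x) (u x)) atTop (nhds (min 1 (u x))) :=
      (hpt1 x).min tendsto_const_nhds
    rw [min_eq_right (h01 x).2] at hmin
    have h7 := hmin.sub (tendsto_const_nhds (x := u x))
    rwa [sub_self] at h7
  -- dominated convergence for the energy sums
  have hSu_fin : (∑' p : V × V, ENNReal.ofReal (G.b p.1 p.2 * (u p.1 - u p.2)^2)) ≠ ⊤ := by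
    intro htop
    have := energy_c0 u
    rw [htop, ENNReal.mul_top (by norm_num : (1/2:ℝ≥0∞) ≠ 0)] at this
    exact hu.ne this
  have hH : Tendsto (fun n => ∑' p : V × V, ENNReal.ofReal (G.b p.1 p.2 *
      ((min (e n p.1) (u p.1) - u p.1) - (min (e n p.2) (u p.2) - u p.2))^2))
      atTop (nhds 0) := by
    refine tsum_tendsto_zero_of_dominated
      (g := fun n p => 2 * ENNReal.ofReal (G.b p.1 p.2 * (e n p.1 - e n p.2)^2)
          + 8 * ENNReal.ofReal (G.b p.1 p.2 * (u p.1 - u p.2)^2))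
      (G := fun p => 8 * ENNReal.ofReal (G.b p.1 p.2 * (u p.1 - u p.2)^2))
      ?_ ?_ ?_ ?_ ?_
    · intro n p
      have hb := G.b_nonneg p.1 p.2
      have hineq := min_sub_sq_le (e n p.1) (e n p.2) (u p.1) (u p.2)
      calc ENNReal.ofReal (G.b p.1 p.2 *
            ((min (e n p.1) (u p.1) - u p.1) - (min (e n p.2) (u p.2) - u p.2))^2)
          ≤ ENNReal.ofReal (2 * (G.b p.1 p.2 * (e n p.1 - e n p.2)^2)
              + 8 * (G.b p.1 p.2 * (u p.1 - u p.2)^2)) := by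
            refine ENNReal.ofReal_le_ofReal ?_
            nlinarith [hineq, hb]
        _ ≤ ENNReal.ofReal (2 * (G.b p.1 p.2 * (e n p.1 - e n p.2)^2))
              + ENNReal.ofReal (8 * (G.b p.1 p.2 * (u p.1 - u p.2)^2)) :=
            ENNReal.ofReal_add_le
        _ = 2 * ENNReal.ofReal (G.b p.1 p.2 * (e n p.1 - e n p.2)^2)
              + 8 * ENNReal.ofReal (G.b p.1 p.2 * (u p.1 - u p.2)^2) := by
            rw [ENNReal.ofReal_mul (by norm_num : (0:ℝ) ≤ 2),
              ENNReal.ofReal_mul (by norm_num : (0:ℝ) ≤ 8)]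
            norm_num
    · intro p
      have h1 : Tendsto (fun n => (min (e n p.1) (u p.1) - u p.1)
          - (min (e n p.2) (u p.2) - u p.2)) atTop (nhds 0) := by
        have := (hfpt p.1).sub (hfpt p.2)
        rwa [sub_zero] at this
      exact ofReal_mul_sq_tendsto_zero _ h1
    · intro p
      have h0 : Tendsto (fun n => e n p.1 - e n p.2) atTop (nhds 0) := by
        have := (hpt1 p.1).sub (hpt1 p.2)
        rwa [sub_self] at this
      have h1 := ENNReal.Tendsto.const_mul (a := (2:ℝ≥0∞))
        (ofReal_mul_sq_tendsto_zero (G.b p.1 p.2) h0) (Or.inr ENNReal.ofNat_ne_top)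
      rw [mul_zero] at h1
      have h2 := h1.add (tendsto_const_nhds
        (x := (8:ℝ≥0∞) * ENNReal.ofReal (G.b p.1 p.2 * (u p.1 - u p.2)^2)))
      rwa [zero_add] at h2
    · have hsplit : ∀ n, (∑' p : V × V,
          (2 * ENNReal.ofReal (G.b p.1 p.2 * (e n p.1 - e n p.2)^2)
          + 8 * ENNReal.ofReal (G.b p.1 p.2 * (u p.1 - u p.2)^2)))
          = 2 * (∑' p : V × V, ENNReal.ofReal (G.b p.1 p.2 * (e n p.1 - e n p.2)^2))
          + 8 * (∑' p : V × V, ENNReal.ofReal (G.b p.1 p.2 * (u p.1 - u p.2)^2)) := by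
        intro n
        rw [ENNReal.tsum_add, ENNReal.tsum_mul_left, ENNReal.tsum_mul_left]
      have h1 := ENNReal.Tendsto.const_mul (a := (2:ℝ≥0∞)) hS (Or.inr ENNReal.ofNat_ne_top)
      rw [mul_zero] at h1
      have h2 := h1.add (tendsto_const_nhds
        (x := (8:ℝ≥0∞) * ∑' p : V × V, ENNReal.ofReal (G.b p.1 p.2 * (u p.1 - u p.2)^2)))
      rw [zero_add] at h2
      refine Tendsto.congr (fun n => (hsplit n).symm) ?_
      rwa [ENNReal.tsum_mul_left]
    · rw [ENNReal.tsum_mul_left]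
      exact ENNReal.mul_ne_top ENNReal.ofNat_ne_top hSu_fin
  -- conclude
  have henergyf : Tendsto (fun n => G.energy (fun x => min (e n x) (u x) - u x))
      atTop (nhds 0) := by
    have h2 := ENNReal.Tendsto.const_mul (a := (1/2:ℝ≥0∞)) hH
      (Or.inr (by norm_num : (1/2:ℝ≥0∞) ≠ ⊤))
    rw [mul_zero] at h2
    exact h2.congr fun n => (energy_c0 _).symm
  have htoReal : Tendsto (fun n =>
      (G.energy (fun x => min (e n x) (u x) - u x)).toReal) atTop (nhds 0) := by
    have h3 := (ENNReal.tendsto_toReal (by simp : (0:ℝ≥0∞) ≠ ⊤)).comp henergyf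
    simpa [Function.comp_def] using h3
  have hfo2 : Tendsto (fun n => (min (e n o) (u o) - u o)^2) atTop (nhds 0) := by
    simpa using (hfpt o).pow 2
  have final := htoReal.add hfo2
  rw [add_zero] at final
  refine final.congr fun n => ?_
  simp [WeightedGraph.ydistSq]
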